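/- With the data of the matrix mean-field map setup (finite type set Φ, matrices H(φ), G(φ), Q(φ) with ‖H(φ)‖ < 1 for all φ, probability weights P), for any two real n×n matrices L₁, L₂ with ‖L₁‖ ≤ 1 and ‖L₂‖ ≤ 1, one has ‖T̄(L₂) - T̄(L₁)‖ ≤ ζ · ‖L₂ - L₁‖, where ζ := ∑_{φ∈Φ} (‖Q(φ)‖ ‖G(φ)‖ / (1 - ‖H(φ)‖)²) P(φ). -/

import Mathlib

set_option maxHeartbeats 1000000
set_option synthInstance.maxHeartbeats 200000


/-- The single-type matrix map `T̄_φ(L) := H + G ∑_{α=0}^∞ (Hᵀ)^α Q L^{α+1}`.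
Matrices are modeled as continuous linear maps on Euclidean space (operator norm
induced by the Euclidean norm); transpose is the adjoint; products are composition. -/
noncomputable def TbarPhi {n : ℕ}
    (H G Q : EuclideanSpace ℝ (Fin n) →L[ℝ] EuclideanSpace ℝ (Fin n))
    (L : EuclideanSpace ℝ (Fin n) →L[ℝ] EuclideanSpace ℝ (Fin n)) :
    EuclideanSpace ℝ (Fin n) →L[ℝ] EuclideanSpace ℝ (Fin n) :=
  H + G * ∑' α : ℕ, (ContinuousLinearMap.adjoint H) ^ α * Q * L ^ (α + 1)

/-- The matrix mean-field map `T̄(L) := ∑_{φ ∈ Φ} T̄_φ(L) P(φ)`. -/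
noncomputable def Tbar {n : ℕ} {Φ : Type*} [Fintype Φ]
    (H G Q : Φ → (EuclideanSpace ℝ (Fin n) →L[ℝ] EuclideanSpace ℝ (Fin n)))
    (P : Φ → ℝ)
    (L : EuclideanSpace ℝ (Fin n) →L[ℝ] EuclideanSpace ℝ (Fin n)) :
    EuclideanSpace ℝ (Fin n) →L[ℝ] EuclideanSpace ℝ (Fin n) :=
  ∑ φ, P φ • TbarPhi (H φ) (G φ) (Q φ) L

abbrev E (n : ℕ) := EuclideanSpace ℝ (Fin n)

lemma pow_norm_le_one {n : ℕ} {A : E n →L[ℝ] E n} (hA : ‖A‖ ≤ 1) (m : ℕ) :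
    ‖A ^ m‖ ≤ 1 := by
  induction m with
  | zero =>
    rw [pow_zero]
    exact ContinuousLinearMap.norm_id_le
  | succ m ih =>
    rw [pow_succ]
    calc ‖A ^ m * A‖ ≤ ‖A ^ m‖ * ‖A‖ := norm_mul_le _ _
      _ ≤ 1 := mul_le_one₀ ih (norm_nonneg _) hA

lemma pow_sub_pow_norm_le {n : ℕ} {A B : E n →L[ℝ] E n} (hA : ‖A‖ ≤ 1) (hB : ‖B‖ ≤ 1) :
    ∀ m : ℕ, ‖A ^ m - B ^ m‖ ≤ m * ‖A - B‖ := by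
  intro m
  induction m with
  | zero =>
    simp only [pow_zero, sub_self, norm_zero, Nat.cast_zero, zero_mul, le_refl]
  | succ m ih =>
    have hAm : ‖A ^ m‖ ≤ 1 := pow_norm_le_one hA m
    have h1 : A ^ (m + 1) - B ^ (m + 1) = A ^ m * (A - B) + (A ^ m - B ^ m) * B := by
      simp only [pow_succ, mul_sub, sub_mul]
      abel
    rw [h1]
    calc ‖A ^ m * (A - B) + (A ^ m - B ^ m) * B‖
        ≤ ‖A ^ m * (A - B)‖ + ‖(A ^ m - B ^ m) * B‖ := norm_add_le _ _
      _ ≤ ‖A ^ m‖ * ‖A - B‖ + ‖A ^ m - B ^ m‖ * ‖B‖ := by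
          gcongr <;> exact norm_mul_le _ _
      _ ≤ 1 * ‖A - B‖ + (m * ‖A - B‖) * 1 := by gcongr
      _ = (m + 1 : ℕ) * ‖A - B‖ := by push_cast; ring

lemma TbarPhi_lipschitz {n : ℕ}
    (H G Q L1 L2 : E n →L[ℝ] E n) (hH : ‖H‖ < 1)
    (hL1 : ‖L1‖ ≤ 1) (hL2 : ‖L2‖ ≤ 1) :
    ‖TbarPhi H G Q L2 - TbarPhi H G Q L1‖
      ≤ ‖Q‖ * ‖G‖ / (1 - ‖H‖) ^ 2 * ‖L2 - L1‖ := by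
  set r := ‖H‖ with hr
  have hr0 : 0 ≤ r := norm_nonneg _
  have h1r : 0 < 1 - r := by linarith
  have hadj : ‖ContinuousLinearMap.adjoint H‖ = r := by
    exact ContinuousLinearMap.adjoint.norm_map H
  have hpow : ∀ i : ℕ, ‖(ContinuousLinearMap.adjoint H) ^ i‖ ≤ r ^ i := by
    intro i
    induction i with
    | zero => rw [pow_zero, pow_zero]; exact ContinuousLinearMap.norm_id_le
    | succ i ih =>
      rw [pow_succ, pow_succ]
      calc ‖(ContinuousLinearMap.adjoint H) ^ i * ContinuousLinearMap.adjoint H‖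
          ≤ ‖(ContinuousLinearMap.adjoint H) ^ i‖ * ‖ContinuousLinearMap.adjoint H‖ :=
            norm_mul_le _ _
        _ ≤ r ^ i * r := by rw [hadj]; gcongr
  set f : (E n →L[ℝ] E n) → ℕ → (E n →L[ℝ] E n) :=
    fun L i => (ContinuousLinearMap.adjoint H) ^ i * Q * L ^ (i + 1) with hf
  have hfb : ∀ (L : E n →L[ℝ] E n), ‖L‖ ≤ 1 → ∀ i, ‖f L i‖ ≤ r ^ i * ‖Q‖ := by
    intro L hL i
    calc ‖(ContinuousLinearMap.adjoint H) ^ i * Q * L ^ (i + 1)‖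
        ≤ ‖(ContinuousLinearMap.adjoint H) ^ i * Q‖ * ‖L ^ (i + 1)‖ := norm_mul_le _ _
      _ ≤ (r ^ i * ‖Q‖) * 1 := by
          gcongr
          · exact le_trans (norm_mul_le _ _) (by gcongr; exact hpow i)
          · exact pow_norm_le_one hL _
      _ = r ^ i * ‖Q‖ := mul_one _
  have hsum : ∀ (L : E n →L[ℝ] E n), ‖L‖ ≤ 1 → Summable (f L) := by
    intro L hL
    exact Summable.of_norm_bounded ((summable_geometric_of_lt_one hr0 hH).mul_right ‖Q‖)
      (hfb L hL)
  have hdiff : TbarPhi H G Q L2 - TbarPhi H G Q L1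
      = G * ∑' i, (f L2 i - f L1 i) := by
    rw [Summable.tsum_sub (hsum L2 hL2) (hsum L1 hL1)]
    simp only [TbarPhi, mul_sub]
    abel
  -- bound each term of the difference series
  set Δ := ‖L2 - L1‖ with hΔ
  have hΔ0 : 0 ≤ Δ := norm_nonneg _
  have hterm : ∀ i : ℕ, ‖f L2 i - f L1 i‖ ≤ (‖Q‖ * Δ) * (((i : ℝ) + 1) * r ^ i) := by
    intro i
    have : f L2 i - f L1 i
        = ((ContinuousLinearMap.adjoint H) ^ i * Q) * (L2 ^ (i + 1) - L1 ^ (i + 1)) := by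
      simp only [hf, mul_sub, mul_assoc]
    rw [this]
    calc ‖((ContinuousLinearMap.adjoint H) ^ i * Q) * (L2 ^ (i + 1) - L1 ^ (i + 1))‖
        ≤ ‖(ContinuousLinearMap.adjoint H) ^ i * Q‖ * ‖L2 ^ (i + 1) - L1 ^ (i + 1)‖ :=
          norm_mul_le _ _
      _ ≤ (r ^ i * ‖Q‖) * (((i : ℝ) + 1) * Δ) := by
          gcongr
          · exact le_trans (norm_mul_le _ _) (by gcongr; exact hpow i)
          · have := pow_sub_pow_norm_le hL2 hL1 (i + 1)
            push_cast at this
            exact this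
      _ = (‖Q‖ * Δ) * (((i : ℝ) + 1) * r ^ i) := by ring
  have hrn : ‖r‖ < 1 := by rwa [Real.norm_of_nonneg hr0]
  have hS1 : HasSum (fun i : ℕ => (i : ℝ) * r ^ i) (r / (1 - r) ^ 2) :=
    hasSum_coe_mul_geometric_of_norm_lt_one hrn
  have hS2 : HasSum (fun i : ℕ => r ^ i) (1 - r)⁻¹ := hasSum_geometric_of_lt_one hr0 hH
  have hS : HasSum (fun i : ℕ => ((i : ℝ) + 1) * r ^ i) (1 / (1 - r) ^ 2) := by
    have := hS1.add hS2
    have heq : (fun i : ℕ => (i : ℝ) * r ^ i + r ^ i) = fun i : ℕ => ((i : ℝ) + 1) * r ^ i := by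
      funext i; ring
    rw [heq] at this
    convert this using 1
    field_simp
    ring
  have hSsum : Summable (fun i : ℕ => ((i : ℝ) + 1) * r ^ i) := hS.summable
  have hnorm_sum : Summable (fun i : ℕ => ‖f L2 i - f L1 i‖) :=
    Summable.of_nonneg_of_le (fun i => norm_nonneg _) hterm ((hSsum.mul_left _))
  calc ‖TbarPhi H G Q L2 - TbarPhi H G Q L1‖
      = ‖G * ∑' i, (f L2 i - f L1 i)‖ := by rw [hdiff]
    _ ≤ ‖G‖ * ‖∑' i, (f L2 i - f L1 i)‖ := norm_mul_le _ _
    _ ≤ ‖G‖ * ∑' i, ‖f L2 i - f L1 i‖ := by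
        gcongr
        exact norm_tsum_le_tsum_norm hnorm_sum
    _ ≤ ‖G‖ * ∑' i : ℕ, (‖Q‖ * Δ) * (((i : ℝ) + 1) * r ^ i) := by
        gcongr ‖G‖ * ?_
        exact Summable.tsum_le_tsum hterm hnorm_sum (hSsum.mul_left _)
    _ = ‖G‖ * ((‖Q‖ * Δ) * (1 / (1 - r) ^ 2)) := by
        rw [tsum_mul_left, hS.tsum_eq]
    _ = ‖Q‖ * ‖G‖ / (1 - r) ^ 2 * Δ := by field_simp

/-- In the matrix mean-field map setup, for any `L₁, L₂` with
`‖L₁‖ ≤ 1` and `‖L₂‖ ≤ 1`, one has `‖T̄(L₂) - T̄(L₁)‖ ≤ ζ ‖L₂ - L₁‖`, where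
`ζ = ∑_φ (‖Q(φ)‖‖G(φ)‖/(1-‖H(φ)‖)²) P(φ)`. -/
theorem stmt9 {n : ℕ} {Φ : Type*} [Fintype Φ] [Nonempty Φ]
    (H G Q : Φ → (EuclideanSpace ℝ (Fin n) →L[ℝ] EuclideanSpace ℝ (Fin n)))
    (hH : ∀ φ, ‖H φ‖ < 1)
    (P : Φ → ℝ) (hP : ∀ φ, 0 ≤ P φ) (hPsum : ∑ φ, P φ = 1)
    (L1 L2 : EuclideanSpace ℝ (Fin n) →L[ℝ] EuclideanSpace ℝ (Fin n))
    (hL1 : ‖L1‖ ≤ 1) (hL2 : ‖L2‖ ≤ 1) :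
    ‖Tbar H G Q P L2 - Tbar H G Q P L1‖
      ≤ (∑ φ, ‖Q φ‖ * ‖G φ‖ / (1 - ‖H φ‖) ^ 2 * P φ) * ‖L2 - L1‖ := by
  have hdiff : Tbar H G Q P L2 - Tbar H G Q P L1
      = ∑ φ, P φ • (TbarPhi (H φ) (G φ) (Q φ) L2 - TbarPhi (H φ) (G φ) (Q φ) L1) := by
    simp only [Tbar, smul_sub, Finset.sum_sub_distrib]
  rw [hdiff]
  calc ‖∑ φ, P φ • (TbarPhi (H φ) (G φ) (Q φ) L2 - TbarPhi (H φ) (G φ) (Q φ) L1)‖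
      ≤ ∑ φ, ‖P φ • (TbarPhi (H φ) (G φ) (Q φ) L2 - TbarPhi (H φ) (G φ) (Q φ) L1)‖ :=
        norm_sum_le _ _
    _ ≤ ∑ φ, P φ * (‖Q φ‖ * ‖G φ‖ / (1 - ‖H φ‖) ^ 2 * ‖L2 - L1‖) := by
        apply Finset.sum_le_sum
        intro φ _
        refine (norm_smul_le (P φ) (TbarPhi (H φ) (G φ) (Q φ) L2 - TbarPhi (H φ) (G φ) (Q φ) L1)).trans ?_
        rw [Real.norm_of_nonneg (hP φ)]
        exact mul_le_mul_of_nonneg_left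
          (TbarPhi_lipschitz (H φ) (G φ) (Q φ) L1 L2 (hH φ) hL1 hL2) (hP φ)
    _ = (∑ φ, ‖Q φ‖ * ‖G φ‖ / (1 - ‖H φ‖) ^ 2 * P φ) * ‖L2 - L1‖ := by
        rw [Finset.sum_mul]
        congr 1
        funext φ
        ring
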